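/- Let G be a rigid graph with G = G₁ ∪ G₂ ∪ {e₁, e₂, e₃}, where V(G₁) ∩ V(G₂) = ∅ and e₁, e₂, e₃ are three edges each joining a distinct vertex of G₁ to a distinct vertex of G₂. Let F be a spanning isostatic subgraph of G. Then {e₁, e₂, e₃} ⊆ E(F), |E(F) ∩ E(Gᵢ)| = 2|V(Gᵢ)| − 3 for i = 1, 2, and consequently G₁ and G₂ are both rigid. -/

import Mathlib

/-- The rigidity-matrix row vector associated to a pair `u, v` in a real realisation. -/
def rigidityVec {W : Type*} [DecidableEq W] (p : W → Fin 2 → ℝ) (u v : W) :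
    W × Fin 2 → ℝ :=
  fun x => if x.1 = u then p u x.2 - p v x.2
    else if x.1 = v then p v x.2 - p u x.2 else 0

/-- A graph is rigid (in `ℝ²`) if the rows of the rigidity matrix of some (equivalently,
any generic) real realisation span a space of dimension `2|W| − 3`. -/
def GraphRigid {W : Type*} [DecidableEq W] (G : SimpleGraph W) : Prop :=
  ∃ p : W → Fin 2 → ℝ,
    Module.finrank ℝ (Submodule.span ℝ
      {w : W × Fin 2 → ℝ | ∃ u v : W, G.Adj u v ∧ w = rigidityVec p u v})
      = 2 * Nat.card W - 3

section Helpers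

open Module Submodule

variable {W : Type*} [DecidableEq W]

lemma rigidityVec_self (p : W → Fin 2 → ℝ) (u : W) : rigidityVec p u u = 0 := by
  funext x
  simp [rigidityVec]

lemma rigidityVec_symm (p : W → Fin 2 → ℝ) (u v : W) :
    rigidityVec p u v = rigidityVec p v u := by
  by_cases h : u = v
  · subst h; rfl
  · funext x
    rcases x with ⟨z, k⟩
    by_cases h1 : z = u
    · subst h1; simp [rigidityVec, h, Ne.symm h]
    · by_cases h2 : z = v
      · subst h2; simp [rigidityVec, h, Ne.symm h, h1]
      · simp [rigidityVec, h1, h2]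

/-- `rigidityVec` as a function on unordered pairs. -/
def rVec (p : W → Fin 2 → ℝ) : Sym2 W → (W × Fin 2 → ℝ) :=
  Sym2.lift ⟨fun u v => rigidityVec p u v, fun u v => rigidityVec_symm p u v⟩

@[simp] lemma rVec_mk (p : W → Fin 2 → ℝ) (u v : W) :
    rVec p s(u, v) = rigidityVec p u v := rfl

lemma sum_eq_pair [Fintype W] {u v : W} (h : u ≠ v) (f : W → ℝ)
    (hf : ∀ z, z ≠ u → z ≠ v → f z = 0) : ∑ z, f z = f u + f v := by
  rw [← Finset.sum_pair h]
  apply (Finset.sum_subset (Finset.subset_univ _) ?_).symm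
  intro z _ hz
  simp only [Finset.mem_insert, Finset.mem_singleton, not_or] at hz
  exact hf z hz.1 hz.2

variable [Fintype W]

/-- Coefficients of the three "trivial motion" functionals. -/
def cL (p : W → Fin 2 → ℝ) (i : Fin 3) (t : W × Fin 2) : ℝ :=
  if i = 0 then (if t.2 = 0 then 1 else 0)
  else if i = 1 then (if t.2 = 1 then 1 else 0)
  else (if t.2 = 0 then -p t.1 1 else p t.1 0)

/-- The linear map dotting with the three trivial motions. -/
def rigL (p : W → Fin 2 → ℝ) : (W × Fin 2 → ℝ) →ₗ[ℝ] (Fin 3 → ℝ) where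
  toFun w := fun i => ∑ t : W × Fin 2, cL p i t * w t
  map_add' w w' := by
    funext i
    simp [mul_add, Finset.sum_add_distrib]
  map_smul' c w := by
    funext i
    simp [Finset.mul_sum, mul_left_comm]

lemma rigL_apply0 (p : W → Fin 2 → ℝ) (w : W × Fin 2 → ℝ) :
    rigL p w 0 = ∑ z, w (z, 0) := by
  simp [rigL, cL, Fintype.sum_prod_type, Fin.sum_univ_two]

lemma rigL_apply1 (p : W → Fin 2 → ℝ) (w : W × Fin 2 → ℝ) :
    rigL p w 1 = ∑ z, w (z, 1) := by
  simp [rigL, cL, Fintype.sum_prod_type, Fin.sum_univ_two]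

lemma rigL_apply2 (p : W → Fin 2 → ℝ) (w : W × Fin 2 → ℝ) :
    rigL p w 2 = ∑ z, (-p z 1 * w (z, 0) + p z 0 * w (z, 1)) := by
  simp [rigL, cL, Fintype.sum_prod_type, Fin.sum_univ_two]

lemma rigL_rigidityVec (p : W → Fin 2 → ℝ) (u v : W) :
    rigL p (rigidityVec p u v) = 0 := by
  by_cases h : u = v
  · subst h; rw [rigidityVec_self]; exact map_zero _
  · funext i
    fin_cases i
    · show rigL p (rigidityVec p u v) 0 = 0
      rw [rigL_apply0, sum_eq_pair h _ (fun z h1 h2 => by simp [rigidityVec, h1, h2])]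
      simp [rigidityVec, h, Ne.symm h]
    · show rigL p (rigidityVec p u v) 1 = 0
      rw [rigL_apply1, sum_eq_pair h _ (fun z h1 h2 => by simp [rigidityVec, h1, h2])]
      simp [rigidityVec, h, Ne.symm h]
    · show rigL p (rigidityVec p u v) 2 = 0
      rw [rigL_apply2, sum_eq_pair h _ (fun z h1 h2 => by simp [rigidityVec, h1, h2])]
      simp only [rigidityVec, if_pos rfl]
      simp [h, Ne.symm h]
      ring

lemma rigL_surjective (p : W → Fin 2 → ℝ) {x y : W} {k₀ : Fin 2}
    (hxy : p x k₀ ≠ p y k₀) : Function.Surjective (rigL p) := by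
  have hne : x ≠ y := fun h => hxy (by rw [h])
  have hd : p x k₀ - p y k₀ ≠ 0 := sub_ne_zero.mpr hxy
  intro c
  have hk : k₀ = 0 ∨ k₀ = 1 := by omega
  rcases hk with hk | hk
  · subst hk
    refine ⟨fun t => if t.1 = x then (if t.2 = 0 then c 0 else c 1
        + (c 2 - c 1 * p x 0 + c 0 * p x 1) / (p x 0 - p y 0))
      else if t.1 = y then (if t.2 = 1 then
        -((c 2 - c 1 * p x 0 + c 0 * p x 1) / (p x 0 - p y 0)) else 0) else 0, ?_⟩
    funext i
    fin_cases i
    · show rigL p _ 0 = c 0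
      rw [rigL_apply0, sum_eq_pair hne _ (fun z h1 h2 => by simp [h1, h2])]
      simp [hne, Ne.symm hne]
    · show rigL p _ 1 = c 1
      rw [rigL_apply1, sum_eq_pair hne _ (fun z h1 h2 => by simp [h1, h2])]
      simp [hne, Ne.symm hne]
    · show rigL p _ 2 = c 2
      rw [rigL_apply2, sum_eq_pair hne _ (fun z h1 h2 => by simp [h1, h2])]
      simp [hne, Ne.symm hne]
      field_simp
      ring
  · subst hk
    refine ⟨fun t => if t.1 = x then (if t.2 = 0 then c 0
        + (c 1 * p x 0 - c 0 * p x 1 - c 2) / (p x 1 - p y 1) else c 1)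
      else if t.1 = y then (if t.2 = 0 then
        -((c 1 * p x 0 - c 0 * p x 1 - c 2) / (p x 1 - p y 1)) else 0) else 0, ?_⟩
    funext i
    fin_cases i
    · show rigL p _ 0 = c 0
      rw [rigL_apply0, sum_eq_pair hne _ (fun z h1 h2 => by simp [h1, h2])]
      simp [hne, Ne.symm hne]
    · show rigL p _ 1 = c 1
      rw [rigL_apply1, sum_eq_pair hne _ (fun z h1 h2 => by simp [h1, h2])]
      simp [hne, Ne.symm hne]
    · show rigL p _ 2 = c 2
      rw [rigL_apply2, sum_eq_pair hne _ (fun z h1 h2 => by simp [h1, h2])]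
      simp [hne, Ne.symm hne]
      field_simp
      ring

/-- Upper bound: rigidity rows span at most a `2|W| − 3`-dimensional space. -/
lemma rigidity_span_finrank_le (p : W → Fin 2 → ℝ) (T : Set (W × Fin 2 → ℝ))
    (hT : ∀ w ∈ T, ∃ u v : W, w = rigidityVec p u v) :
    Module.finrank ℝ (Submodule.span ℝ T) ≤ 2 * Fintype.card W - 3 := by
  by_cases hconst : ∀ a b : W, p a = p b
  · have hbot : Submodule.span ℝ T = ⊥ := by
      rw [Submodule.span_eq_bot]
      intro w hw
      obtain ⟨a, b, rfl⟩ := hT w hw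
      funext t
      rcases t with ⟨z, k⟩
      have hab := hconst a b
      by_cases h1 : z = a <;> by_cases h2 : z = b <;> simp [rigidityVec, h1, h2, hab]
    rw [hbot]
    simp
  · push_neg at hconst
    obtain ⟨a, b, hab⟩ := hconst
    obtain ⟨k₀, hk₀⟩ : ∃ k, p a k ≠ p b k := by
      by_contra hcon
      push_neg at hcon
      exact hab (funext hcon)
    have hrange : LinearMap.range (rigL p) = ⊤ :=
      LinearMap.range_eq_top.mpr (rigL_surjective p hk₀)
    have h1 := LinearMap.finrank_range_add_finrank_ker (rigL p)
    rw [hrange] at h1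
    have h2 : finrank ℝ (⊤ : Submodule ℝ (Fin 3 → ℝ)) = 3 := by
      rw [finrank_top, Module.finrank_fintype_fun_eq_card]
      simp
    have h3 : finrank ℝ (W × Fin 2 → ℝ) = 2 * Fintype.card W := by
      rw [Module.finrank_fintype_fun_eq_card]
      simp [Fintype.card_prod, mul_comm]
    have hker : finrank ℝ (LinearMap.ker (rigL p)) = 2 * Fintype.card W - 3 := by
      omega
    have hle : Submodule.span ℝ T ≤ LinearMap.ker (rigL p) := by
      rw [Submodule.span_le]
      intro w hw
      obtain ⟨u', v', rfl⟩ := hT w hw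
      exact LinearMap.mem_ker.mpr (rigL_rigidityVec p u' v')
    calc finrank ℝ (Submodule.span ℝ T) ≤ finrank ℝ (LinearMap.ker (rigL p)) :=
          Submodule.finrank_mono hle
      _ = 2 * Fintype.card W - 3 := hker

end Helpers


section Side

open Module Submodule SimpleGraph

/-- Vectors supported on coordinates over a vertex subset. -/
def suppSub {V : Type*} (A : Set V) : Submodule ℝ (V × Fin 2 → ℝ) where
  carrier := {w | ∀ t : V × Fin 2, t.1 ∉ A → w t = 0}
  add_mem' := fun h h' t ht => by
    simp only [Pi.add_apply, h t ht, h' t ht, add_zero]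
  zero_mem' := fun t ht => rfl
  smul_mem' := fun c w h t ht => by
    simp only [Pi.smul_apply, h t ht, smul_zero]

lemma side_bound {V : Type*} [Fintype V] [DecidableEq V] {G : SimpleGraph V}
    (G₁ F : G.Subgraph) (q : V → Fin 2 → ℝ)
    (hind : LinearIndependent ℝ (fun e : ↥(F.edgeSet ∩ G₁.edgeSet) => rVec q ↑e)) :
    (F.edgeSet ∩ G₁.edgeSet).ncard ≤
      Module.finrank ℝ (Submodule.span ℝ
        {w : ↥G₁.verts × Fin 2 → ℝ |
          ∃ a b : ↥G₁.verts, G₁.coe.Adj a b ∧ w = rigidityVec (fun x : ↥G₁.verts => q ↑x) a b}) := by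
  classical
  set p₁ : ↥G₁.verts → Fin 2 → ℝ := fun x : ↥G₁.verts => q ↑x with hp₁
  set R : (V × Fin 2 → ℝ) →ₗ[ℝ] (↥G₁.verts × Fin 2 → ℝ) :=
    LinearMap.funLeft ℝ ℝ (fun zk : ↥G₁.verts × Fin 2 => ((zk.1 : V), zk.2)) with hR
  -- rows of edges of G₁ are supported on G₁.verts
  have key1 : ∀ e ∈ G₁.edgeSet, rVec q e ∈ suppSub G₁.verts := by
    intro e
    induction e using Sym2.ind with
    | _ x y =>
      intro he t ht
      have hadj : G₁.Adj x y := Subgraph.mem_edgeSet.mp he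
      rcases t with ⟨z, k⟩
      have hzx : z ≠ x := fun h => ht (h ▸ G₁.edge_vert hadj)
      have hzy : z ≠ y := fun h => ht (h ▸ G₁.edge_vert hadj.symm)
      simp [rigidityVec, hzx, hzy]
  -- restriction of a G₁-edge row is a rigidity row of G₁.coe
  have key2 : ∀ e ∈ G₁.edgeSet, ∃ a b : ↥G₁.verts,
      G₁.coe.Adj a b ∧ R (rVec q e) = rigidityVec p₁ a b := by
    intro e
    induction e using Sym2.ind with
    | _ x y =>
      intro he
      have hadj : G₁.Adj x y := Subgraph.mem_edgeSet.mp he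
      refine ⟨⟨x, G₁.edge_vert hadj⟩, ⟨y, G₁.edge_vert hadj.symm⟩, hadj, ?_⟩
      funext t
      rcases t with ⟨z, k⟩
      simp only [hR, LinearMap.funLeft_apply, rVec_mk, rigidityVec, hp₁]
      by_cases h1 : (z : V) = x
      · simp [h1, Subtype.ext_iff]
      · by_cases h2 : (z : V) = y <;> simp [h1, h2, Subtype.ext_iff]
  -- the restricted family is linearly independent
  have hdisj : Disjoint (Submodule.span ℝ
      (Set.range (fun e : ↥(F.edgeSet ∩ G₁.edgeSet) => rVec q ↑e))) (LinearMap.ker R) := by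
    rw [disjoint_iff]
    rw [eq_bot_iff]
    rintro w ⟨hw1, hw2⟩
    have hwS : w ∈ suppSub G₁.verts := by
      have : Submodule.span ℝ (Set.range (fun e : ↥(F.edgeSet ∩ G₁.edgeSet) => rVec q ↑e))
          ≤ suppSub G₁.verts := by
        rw [Submodule.span_le]
        rintro _ ⟨e, rfl⟩
        exact key1 _ e.2.2
      exact this hw1
    have hker : R w = 0 := hw2
    simp only [Submodule.mem_bot]
    funext t
    rcases t with ⟨z, k⟩
    by_cases hz : z ∈ G₁.verts
    · have := congrFun hker (⟨z, hz⟩, k)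
      simpa [hR, LinearMap.funLeft_apply] using this
    · exact hwS (z, k) hz
  have hind' : LinearIndependent ℝ
      (⇑R ∘ (fun e : ↥(F.edgeSet ∩ G₁.edgeSet) => rVec q ↑e)) := hind.map hdisj
  haveI : Fintype ↥(F.edgeSet ∩ G₁.edgeSet) := Fintype.ofFinite _
  have hcard : Fintype.card ↥(F.edgeSet ∩ G₁.edgeSet) = (F.edgeSet ∩ G₁.edgeSet).ncard := by
    rw [← Nat.card_coe_set_eq, Nat.card_eq_fintype_card]
  have h4 : finrank ℝ (Submodule.span ℝ
      (Set.range (⇑R ∘ (fun e : ↥(F.edgeSet ∩ G₁.edgeSet) => rVec q ↑e))))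
      = (F.edgeSet ∩ G₁.edgeSet).ncard := by
    rw [finrank_span_eq_card hind', hcard]
  have h5 : Submodule.span ℝ
      (Set.range (⇑R ∘ (fun e : ↥(F.edgeSet ∩ G₁.edgeSet) => rVec q ↑e)))
      ≤ Submodule.span ℝ {w : ↥G₁.verts × Fin 2 → ℝ |
          ∃ a b : ↥G₁.verts, G₁.coe.Adj a b ∧ w = rigidityVec p₁ a b} := by
    rw [Submodule.span_le]
    rintro _ ⟨e, rfl⟩
    obtain ⟨a, b, hab, heq⟩ := key2 _ e.2.2
    exact Submodule.subset_span ⟨a, b, hab, heq⟩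
  rw [← h4]
  exact Submodule.finrank_mono h5

end Side


open Module Submodule SimpleGraph in
/-- Let `G` be a rigid graph which is the union of vertex-disjoint subgraphs `G₁, G₂`
together with three edges `eᵢ = uᵢvᵢ` joining distinct vertices `u₀,u₁,u₂` of `G₁` to
distinct vertices `v₀,v₁,v₂` of `G₂`, and let `F` be a spanning isostatic subgraph of
`G`.  Then `e₁, e₂, e₃ ∈ E(F)`, `|E(F) ∩ E(Gᵢ)| = 2|V(Gᵢ)| − 3` for `i = 1, 2`, and
consequently `G₁` and `G₂` are both rigid. -/
theorem three_edge_cut_isostatic_count {V : Type*} [Fintype V] [DecidableEq V]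
    (G : SimpleGraph V) (G₁ G₂ : G.Subgraph)
    (hvdisj : Disjoint G₁.verts G₂.verts)
    (hvcover : G₁.verts ∪ G₂.verts = Set.univ)
    (u v : Fin 3 → V) (hu : ∀ i, u i ∈ G₁.verts) (hv : ∀ i, v i ∈ G₂.verts)
    (huinj : Function.Injective u) (hvinj : Function.Injective v)
    (hedges : G.edgeSet = G₁.edgeSet ∪ G₂.edgeSet ∪ Set.range (fun i => s(u i, v i)))
    (hGrigid : GraphRigid G)
    (F : G.Subgraph) (hFspan : F.verts = Set.univ)
    (hFrigid : GraphRigid F.coe)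
    (hFiso : F.edgeSet.ncard = 2 * Fintype.card V - 3) :
    (∀ i, s(u i, v i) ∈ F.edgeSet) ∧
      (F.edgeSet ∩ G₁.edgeSet).ncard = 2 * G₁.verts.ncard - 3 ∧
      (F.edgeSet ∩ G₂.edgeSet).ncard = 2 * G₂.verts.ncard - 3 ∧
      GraphRigid G₁.coe ∧ GraphRigid G₂.coe := by
  classical
  obtain ⟨p₀, hp₀⟩ := hFrigid
  -- transport the realisation to `V`
  have hmemF : ∀ x : V, x ∈ F.verts := fun x => by rw [hFspan]; trivial
  set ι : V → ↥F.verts := fun x => ⟨x, hmemF x⟩ with hιdef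
  have hι : ∀ a : ↥F.verts, ι ↑a = a := fun a => Subtype.ext rfl
  set eVF : V ≃ ↥F.verts := Equiv.mk ι Subtype.val (fun x => rfl) hι with heVF
  set Φ : (↥F.verts × Fin 2 → ℝ) ≃ₗ[ℝ] (V × Fin 2 → ℝ) :=
    LinearEquiv.funCongrLeft ℝ ℝ (eVF.prodCongr (Equiv.refl (Fin 2))) with hΦdef
  set q : V → Fin 2 → ℝ := fun x => p₀ (ι x) with hq
  have hΦapp : ∀ (w : ↥F.verts × Fin 2 → ℝ) (z : V) (k : Fin 2),
      Φ w (z, k) = w (ι z, k) := fun w z k => rfl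
  have hΦrv : ∀ a b : ↥F.verts, Φ (rigidityVec p₀ a b) = rigidityVec q ↑a ↑b := by
    intro a b
    funext t
    rcases t with ⟨z, k⟩
    rw [hΦapp]
    have hqv : ∀ (c : ↥F.verts) (k : Fin 2), q ↑c k = p₀ c k := fun c k => rfl
    have c1 : (ι z = a) = (z = ↑a) := propext ⟨fun h => by rw [← h], fun h => by rw [h]⟩
    have c2 : (ι z = b) = (z = ↑b) := propext ⟨fun h => by rw [← h], fun h => by rw [h]⟩
    simp only [rigidityVec, c1, c2, hqv]
  have himage : ⇑Φ '' {w | ∃ a b : ↥F.verts, F.coe.Adj a b ∧ w = rigidityVec p₀ a b}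
      = {w : V × Fin 2 → ℝ | ∃ x y : V, F.Adj x y ∧ w = rigidityVec q x y} := by
    ext w
    constructor
    · rintro ⟨w', ⟨a, b, hab, rfl⟩, rfl⟩
      exact ⟨↑a, ↑b, hab, hΦrv a b⟩
    · rintro ⟨x, y, hxy, rfl⟩
      exact ⟨rigidityVec p₀ (ι x) (ι y), ⟨ι x, ι y, hxy, rfl⟩, hΦrv (ι x) (ι y)⟩
  have hNcard : Nat.card ↥F.verts = Fintype.card V := by
    rw [Nat.card_congr eVF.symm, Nat.card_eq_fintype_card]
  have hspanF : finrank ℝ (Submodule.span ℝ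
      {w : V × Fin 2 → ℝ | ∃ x y : V, F.Adj x y ∧ w = rigidityVec q x y})
      = 2 * Fintype.card V - 3 := by
    rw [← himage,
      show ⇑Φ '' {w | ∃ a b : ↥F.verts, F.coe.Adj a b ∧ w = rigidityVec p₀ a b}
        = ⇑Φ.toLinearMap '' {w | ∃ a b : ↥F.verts, F.coe.Adj a b ∧ w = rigidityVec p₀ a b}
        from rfl,
      Submodule.span_image, LinearEquiv.finrank_map_eq Φ, hp₀, hNcard]
  have hrowsF_eq : {w : V × Fin 2 → ℝ | ∃ x y : V, F.Adj x y ∧ w = rigidityVec q x y}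
      = rVec q '' F.edgeSet := by
    ext w
    constructor
    · rintro ⟨x, y, hxy, rfl⟩
      exact ⟨s(x, y), hxy, rfl⟩
    · rintro ⟨e, he, rfl⟩
      revert he
      induction e using Sym2.ind with
      | _ x y => exact fun he => ⟨x, y, he, rfl⟩
  haveI : Fintype ↥F.edgeSet := Fintype.ofFinite _
  have hindF : LinearIndependent ℝ (fun e : ↥F.edgeSet => rVec q ↑e) := by
    rw [linearIndependent_iff_card_eq_finrank_span]
    have hr : Set.range (fun e : ↥F.edgeSet => rVec q ↑e) = rVec q '' F.edgeSet := by
      rw [show (fun e : ↥F.edgeSet => rVec q ↑e) = rVec q ∘ Subtype.val from rfl,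
        Set.range_comp, Subtype.range_coe]
    have hcardE : Fintype.card ↥F.edgeSet = F.edgeSet.ncard := by
      rw [← Nat.card_coe_set_eq, Nat.card_eq_fintype_card]
    rw [Set.finrank, hr, ← hrowsF_eq, hspanF, hcardE, hFiso]
  -- independence of the two side families
  have hind₁ : LinearIndependent ℝ (fun e : ↥(F.edgeSet ∩ G₁.edgeSet) => rVec q ↑e) :=
    hindF.comp (Set.inclusion Set.inter_subset_left) (Set.inclusion_injective _)
  have hind₂ : LinearIndependent ℝ (fun e : ↥(F.edgeSet ∩ G₂.edgeSet) => rVec q ↑e) :=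
    hindF.comp (Set.inclusion Set.inter_subset_left) (Set.inclusion_injective _)
  haveI : Fintype ↥G₁.verts := Fintype.ofFinite _
  haveI : Fintype ↥G₂.verts := Fintype.ofFinite _
  have hc₁ : Fintype.card ↥G₁.verts = G₁.verts.ncard := by
    rw [← Nat.card_coe_set_eq, Nat.card_eq_fintype_card]
  have hc₂ : Fintype.card ↥G₂.verts = G₂.verts.ncard := by
    rw [← Nat.card_coe_set_eq, Nat.card_eq_fintype_card]
  have ha := side_bound G₁ F q hind₁
  have hb := side_bound G₂ F q hind₂
  have ha' : finrank ℝ (Submodule.span ℝ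
      {w : ↥G₁.verts × Fin 2 → ℝ |
        ∃ a b : ↥G₁.verts, G₁.coe.Adj a b ∧ w = rigidityVec (fun x : ↥G₁.verts => q ↑x) a b})
      ≤ 2 * G₁.verts.ncard - 3 := by
    rw [← hc₁]
    exact rigidity_span_finrank_le _ _ (by rintro w ⟨a, b, -, hw⟩; exact ⟨a, b, hw⟩)
  have hb' : finrank ℝ (Submodule.span ℝ
      {w : ↥G₂.verts × Fin 2 → ℝ |
        ∃ a b : ↥G₂.verts, G₂.coe.Adj a b ∧ w = rigidityVec (fun x : ↥G₂.verts => q ↑x) a b})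
      ≤ 2 * G₂.verts.ncard - 3 := by
    rw [← hc₂]
    exact rigidity_span_finrank_le _ _ (by rintro w ⟨a, b, -, hw⟩; exact ⟨a, b, hw⟩)
  -- counting
  set E₃ : Set (Sym2 V) := Set.range (fun i => s(u i, v i)) with hE₃
  have hFsub : F.edgeSet ⊆ G.edgeSet := F.edgeSet_subset
  have hsplit : F.edgeSet =
      (F.edgeSet ∩ G₁.edgeSet) ∪ (F.edgeSet ∩ G₂.edgeSet) ∪ (F.edgeSet ∩ E₃) := by
    rw [← Set.inter_union_distrib_left, ← Set.inter_union_distrib_left, hE₃, ← hedges]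
    exact (Set.inter_eq_left.mpr hFsub).symm
  have hd12 : Disjoint (F.edgeSet ∩ G₁.edgeSet) (F.edgeSet ∩ G₂.edgeSet) := by
    apply Set.disjoint_left.mpr
    rintro e ⟨-, h1⟩ ⟨-, h2⟩
    revert h1 h2
    induction e using Sym2.ind with
    | _ x y =>
      intro h1 h2
      exact Set.disjoint_left.mp hvdisj (G₁.edge_vert (Subgraph.mem_edgeSet.mp h1))
        (G₂.edge_vert (Subgraph.mem_edgeSet.mp h2))
  have hd13 : Disjoint (F.edgeSet ∩ G₁.edgeSet) (F.edgeSet ∩ E₃) := by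
    apply Set.disjoint_left.mpr
    rintro e ⟨-, h1⟩ ⟨-, h3⟩
    obtain ⟨i, rfl⟩ := h3
    exact Set.disjoint_left.mp hvdisj
      (G₁.edge_vert (Subgraph.mem_edgeSet.mp h1).symm) (hv i)
  have hd23 : Disjoint (F.edgeSet ∩ G₂.edgeSet) (F.edgeSet ∩ E₃) := by
    apply Set.disjoint_left.mpr
    rintro e ⟨-, h2⟩ ⟨-, h3⟩
    obtain ⟨i, rfl⟩ := h3
    exact Set.disjoint_left.mp hvdisj (hu i)
      (G₂.edge_vert (Subgraph.mem_edgeSet.mp h2))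
  have hcards : (F.edgeSet ∩ G₁.edgeSet).ncard + (F.edgeSet ∩ G₂.edgeSet).ncard
      + (F.edgeSet ∩ E₃).ncard = 2 * Fintype.card V - 3 := by
    have h12 : ((F.edgeSet ∩ G₁.edgeSet) ∪ (F.edgeSet ∩ G₂.edgeSet)).ncard
        = (F.edgeSet ∩ G₁.edgeSet).ncard + (F.edgeSet ∩ G₂.edgeSet).ncard :=
      Set.ncard_union_eq hd12 (Set.toFinite _) (Set.toFinite _)
    have h123 : (((F.edgeSet ∩ G₁.edgeSet) ∪ (F.edgeSet ∩ G₂.edgeSet))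
        ∪ (F.edgeSet ∩ E₃)).ncard
        = (F.edgeSet ∩ G₁.edgeSet).ncard + (F.edgeSet ∩ G₂.edgeSet).ncard
          + (F.edgeSet ∩ E₃).ncard := by
      rw [Set.ncard_union_eq (Set.disjoint_union_left.mpr ⟨hd13, hd23⟩)
        (Set.toFinite _) (Set.toFinite _), h12]
    rw [← h123, ← hsplit, hFiso]
  have hn : Fintype.card V = G₁.verts.ncard + G₂.verts.ncard := by
    have h := Set.ncard_union_eq hvdisj (Set.toFinite _) (Set.toFinite _)
    rw [hvcover, Set.ncard_univ, Nat.card_eq_fintype_card] at h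
    exact h
  have hn₁ : 3 ≤ G₁.verts.ncard := by
    have h1 : Set.range u ⊆ G₁.verts := Set.range_subset_iff.mpr hu
    have h2 : (Set.range u).ncard = 3 := by
      rw [← Nat.card_coe_set_eq, Nat.card_range_of_injective huinj,
        Nat.card_eq_fintype_card, Fintype.card_fin]
    rw [← h2]
    exact Set.ncard_le_ncard h1 (Set.toFinite _)
  have hn₂ : 3 ≤ G₂.verts.ncard := by
    have h1 : Set.range v ⊆ G₂.verts := Set.range_subset_iff.mpr hv
    have h2 : (Set.range v).ncard = 3 := by
      rw [← Nat.card_coe_set_eq, Nat.card_range_of_injective hvinj,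
        Nat.card_eq_fintype_card, Fintype.card_fin]
    rw [← h2]
    exact Set.ncard_le_ncard h1 (Set.toFinite _)
  have hE₃card : E₃.ncard ≤ 3 := by
    rw [hE₃, ← Set.image_univ]
    refine le_trans (Set.ncard_image_le (Set.toFinite _)) ?_
    rw [Set.ncard_univ, Nat.card_eq_fintype_card, Fintype.card_fin]
  have hccle : (F.edgeSet ∩ E₃).ncard ≤ 3 :=
    le_trans (Set.ncard_le_ncard Set.inter_subset_right (Set.toFinite _)) hE₃card
  have hub₁ : (F.edgeSet ∩ G₁.edgeSet).ncard ≤ 2 * G₁.verts.ncard - 3 := le_trans ha ha'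
  have hub₂ : (F.edgeSet ∩ G₂.edgeSet).ncard ≤ 2 * G₂.verts.ncard - 3 := le_trans hb hb'
  have keys : (F.edgeSet ∩ G₁.edgeSet).ncard = 2 * G₁.verts.ncard - 3 ∧
      (F.edgeSet ∩ G₂.edgeSet).ncard = 2 * G₂.verts.ncard - 3 ∧
      (F.edgeSet ∩ E₃).ncard = 3 := by omega
  refine ⟨?_, keys.1, keys.2.1, ?_, ?_⟩
  · intro i
    have hceq : F.edgeSet ∩ E₃ = E₃ :=
      Set.eq_of_subset_of_ncard_le Set.inter_subset_right
        (by rw [keys.2.2]; exact hE₃card) (Set.toFinite _)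
    have : s(u i, v i) ∈ E₃ := ⟨i, rfl⟩
    rw [← hceq] at this
    exact this.1
  · refine ⟨fun x : ↥G₁.verts => q ↑x, ?_⟩
    rw [Nat.card_coe_set_eq]
    exact le_antisymm ha' (by rw [← keys.1]; exact ha)
  · refine ⟨fun x : ↥G₂.verts => q ↑x, ?_⟩
    rw [Nat.card_coe_set_eq]
    exact le_antisymm hb' (by rw [← keys.2.1]; exact hb)
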